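/- Let (X, w) be a weighted pure d-dimensional simplicial complex and let −1 ≤ i < j ≤ d. For every f ∈ C^j(X; ℝ) and every σ ∈ X(i), the repeated adjoint signless differential satisfies (d_i^* ⋯ d_{j−1}^* f)(σ) = Σ_{τ ∈ X_σ(j−i−1)} w_σ(τ) f_σ(τ), i.e. it is the w_σ-weighted average of the localization f_σ over the (j−i−1)-dimensional faces of the link X_σ. -/

import Mathlib

/-!
Weighted pure simplicial complexes, links, cochains, signless differentials
and high dimensional random walk operators.

Conventions: faces are `Finset`s of vertices. A cochain "of dimension `k`"
(an element of `C^k(X;ℝ)`) is represented by a function `Finset V → ℝ`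
evaluated on faces of **cardinality** `c = k + 1`; all operators are indexed
by cardinality.
-/

open Finset

namespace HDRW

noncomputable section

variable {V : Type*} [DecidableEq V] [Fintype V]

/-- A weighted family of faces (the data of a weighted complex or of a link). -/
structure WFam (V : Type*) [DecidableEq V] [Fintype V] where
  faces : Finset (Finset V)
  w : Finset V → ℝ

namespace WFam

/-- The faces of cardinality `c` (i.e. of dimension `c - 1`). -/
def dimFaces (Y : WFam V) (c : ℕ) : Finset (Finset V) :=
  Y.faces.filter fun σ => σ.card = c

/-- The link of a face `τ`, as a weighted family; the weights are
`w_τ(s) = w (s ∪ τ) / (C(|s| + |τ|, |τ|) * w τ)`. -/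
def link (Y : WFam V) (τ : Finset V) : WFam V where
  faces := Finset.univ.powerset.filter fun s => Disjoint s τ ∧ s ∪ τ ∈ Y.faces
  w := fun s => Y.w (s ∪ τ) / (((s.card + τ.card).choose τ.card : ℝ) * Y.w τ)

/-- The inner product of two `c`-cochains: `⟨f, g⟩ = Σ_{σ} w σ * f σ * g σ`. -/
def inner (Y : WFam V) (c : ℕ) (f g : Finset V → ℝ) : ℝ :=
  ∑ σ ∈ Y.dimFaces c, Y.w σ * (f σ * g σ)

/-- The squared norm `‖f‖² = ⟨f, f⟩` of a `c`-cochain. -/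
def norm2 (Y : WFam V) (c : ℕ) (f : Finset V → ℝ) : ℝ := Y.inner c f f

end WFam

/-- The signless differential `d` from cochains on faces of cardinality `c`
(dimension `c-1`) to cochains on faces of cardinality `c+1`:
`(d f)(σ) = (1/(c+1)) Σ_{τ ⊆ σ, |τ| = c} f τ`. -/
def sDiff (c : ℕ) (f : Finset V → ℝ) : Finset V → ℝ :=
  fun σ => ((c : ℝ) + 1)⁻¹ * ∑ τ ∈ σ.powerset.filter (fun τ => τ.card = c), f τ

/-- Iterated signless differential `C_a → C_{a+n}` (in cardinality indexing),
i.e. `d_{a+n-2} ⋯ d_{a-1}` in dimension indexing. -/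
def sDiffIter (a : ℕ) : ℕ → (Finset V → ℝ) → (Finset V → ℝ)
  | 0, f => f
  | n + 1, f => sDiff (a + n) (sDiffIter a n f)

namespace WFam

/-- The adjoint `d^*` of the signless differential, from cochains on faces of
cardinality `c+1` to cochains on faces of cardinality `c`; it is given by the
explicit formula `(d^* f)(τ) = Σ_{σ ∈ X(c), τ ⊆ σ} w_τ(σ ∖ τ) * f σ` (a sum
over the cardinality-`(c+1)` faces containing `τ`). -/
def sAdj (Y : WFam V) (c : ℕ) (f : Finset V → ℝ) : Finset V → ℝ :=
  fun τ => ∑ σ ∈ (Y.dimFaces (c + 1)).filter (fun σ => τ ⊆ σ),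
    (Y.link τ).w (σ \ τ) * f σ

/-- Iterated adjoint of the signless differential, `C_{a+n} → C_a`
(in cardinality indexing), i.e. `d_{a-1}^* ⋯ d_{a+n-2}^*`. -/
def sAdjIter (Y : WFam V) : ℕ → ℕ → (Finset V → ℝ) → (Finset V → ℝ)
  | _, 0, f => f
  | a, n + 1, f => Y.sAdj a (sAdjIter Y (a + 1) n f)

/-- The non-lazy up-down random walk operator `M⁺` on cochains of cardinality
`c` (dimension `k = c-1`): `(M⁺ f)(σ) = (1/(k+1)) Σ_{τ, σ ∪ τ ∈ X(k+1)} w_σ(τ∖σ) f τ`. -/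
def nonLazy (Y : WFam V) (c : ℕ) (f : Finset V → ℝ) : Finset V → ℝ :=
  fun σ => (c : ℝ)⁻¹ *
    ∑ τ ∈ (Y.dimFaces c).filter (fun τ => σ ∪ τ ∈ Y.dimFaces (c + 1)),
      (Y.link σ).w (τ \ σ) * f τ

/-- The (lazy) up-down random walk operator `U` on cochains of cardinality `c`
(dimension `k = c-1`):
`(U f)(σ) = (1/(k+2)) f σ + (1/(k+2)) Σ_{τ, σ ∪ τ ∈ X(k+1)} w_σ(τ∖σ) f τ`. -/
def upDown (Y : WFam V) (c : ℕ) (f : Finset V → ℝ) : Finset V → ℝ :=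
  fun σ => ((c : ℝ) + 1)⁻¹ * f σ + ((c : ℝ) + 1)⁻¹ *
    ∑ τ ∈ (Y.dimFaces c).filter (fun τ => σ ∪ τ ∈ Y.dimFaces (c + 1)),
      (Y.link σ).w (τ \ σ) * f τ

/-- The down-up random walk operator `D` on cochains of cardinality `c`
(dimension `k = c-1`). -/
def downUp (Y : WFam V) (c : ℕ) (f : Finset V → ℝ) : Finset V → ℝ :=
  fun σ => (c : ℝ)⁻¹ *
      (∑ τ' ∈ σ.powerset.filter (fun τ' => τ'.card = c - 1), (Y.link τ').w (σ \ τ')) * f σ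
    + (c : ℝ)⁻¹ *
      ∑ τ ∈ (Y.dimFaces c).filter (fun τ => τ ≠ σ ∧ σ ∩ τ ∈ Y.dimFaces (c - 1)),
        (Y.link (σ ∩ τ)).w (τ \ σ) * f τ

/-- The `i`-down-up operator `D^i = d ⋯ d d^* ⋯ d^*` (going down `i+1` steps and
back up) on cochains of cardinality `c` (dimension `k = c-1`); in dimension
indexing this is `D_k^i = d_{k-1} ⋯ d_{k-i-1} d_{k-i-1}^* ⋯ d_{k-1}^*`. -/
def downUpIter (Y : WFam V) (c i : ℕ) (f : Finset V → ℝ) : Finset V → ℝ :=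
  sDiffIter (c - (i + 1)) (i + 1) (Y.sAdjIter (c - (i + 1)) (i + 1) f)

/-- `Y` (through its 1-skeleton) is a `γ`-(one sided) spectral expander:
every function on the vertices orthogonal to the constants has Rayleigh
quotient of the non-lazy random walk at most `γ` (Rayleigh characterization of
"the second largest eigenvalue of `M₀⁺` is at most `γ`"). -/
def isExpander (Y : WFam V) (γ : ℝ) : Prop :=
  ∀ f : Finset V → ℝ, Y.inner 1 f (fun _ => 1) = 0 →
    Y.inner 1 (Y.nonLazy 1 f) f ≤ γ * Y.norm2 1 f

/-- `Y` (through its 1-skeleton) is connected: the eigenvalue `1` of the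
non-lazy random walk `M₀⁺` has multiplicity one, i.e. every nonzero function on
the vertices orthogonal to the constants has Rayleigh quotient strictly
less than `1`. -/
def isConnected (Y : WFam V) : Prop :=
  ∀ f : Finset V → ℝ, Y.inner 1 f (fun _ => 1) = 0 → Y.norm2 1 f ≠ 0 →
    Y.inner 1 (Y.nonLazy 1 f) f < Y.norm2 1 f

/-- `f` is an `i`-level cochain of cardinality `c` (dimension `k = c-1`) with
respect to localization: for every face `σ` of cardinality `i` (i.e. of
dimension `i-1`), the localization `f_σ` is orthogonal to the constants in the
link `X_σ`. -/
def isLevel (Y : WFam V) (i c : ℕ) (f : Finset V → ℝ) : Prop :=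
  ∀ σ ∈ Y.dimFaces i,
    (Y.link σ).inner (c - i) (fun s => f (σ ∪ s)) (fun _ => 1) = 0

/-- `f` is a proper `i`-level cochain of cardinality `c`: it is an `i`-level
cochain which is in addition orthogonal to every `(i+1)`-level cochain. -/
def isProperLevel (Y : WFam V) (i c : ℕ) (f : Finset V → ℝ) : Prop :=
  Y.isLevel i c f ∧ ∀ g : Finset V → ℝ, Y.isLevel (i + 1) c g → Y.inner c f g = 0

end WFam

/-- The coboundary operator on oriented cochains (represented by their values
on the increasing ordering of each face, with respect to a linear order on the
vertices): `(δ f)(σ) = Σ_{j} (-1)^j f(σ ∖ {j-th smallest element of σ})`. -/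
def coboundary {V : Type*} [LinearOrder V] [Fintype V] (f : Finset V → ℝ) :
    Finset V → ℝ :=
  fun σ => ∑ v ∈ σ, (-1 : ℝ) ^ (σ.filter (fun u => u < v)).card * f (σ.erase v)

/-- A weighted pure `d`-dimensional simplicial complex: a downward closed
family of faces, each contained in a face of cardinality `d+1`
(dimension `d`), together with a weight function `w : X → (0, 1]` summing to
`1` on the top faces and satisfying the averaging recurrence on lower faces. -/
structure WSC (V : Type*) [DecidableEq V] [Fintype V] (d : ℕ) extends WFam V where
  empty_mem : ∅ ∈ faces
  down_closed : ∀ ⦃σ⦄, σ ∈ faces → ∀ ⦃τ⦄, τ ⊆ σ → τ ∈ faces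
  isPure : ∀ σ ∈ faces, ∃ σ' ∈ faces, σ ⊆ σ' ∧ σ'.card = d + 1
  w_pos : ∀ σ ∈ faces, 0 < w σ
  w_le_one : ∀ σ ∈ faces, w σ ≤ 1
  w_sum_top : ∑ σ ∈ faces.filter (fun σ => σ.card = d + 1), w σ = 1
  w_down : ∀ τ ∈ faces, τ.card ≤ d →
    w τ = (((d + 1).choose τ.card : ℝ))⁻¹ *
      ∑ σ ∈ faces.filter (fun σ => σ.card = d + 1 ∧ τ ⊆ σ), w σ


variable {d : ℕ}

/-- For `-1 ≤ i < j ≤ d` (here `a = i + 1`, `n = j - i ≥ 1`),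
for every `f ∈ C^j(X;ℝ)` and every `σ ∈ X(i)`:
`(d_i^* ⋯ d_{j-1}^* f)(σ) = Σ_{τ ∈ X_σ(j-i-1)} w_σ(τ) f_σ(τ)`, the
`w_σ`-weighted average of the localization `f_σ` over the `(j-i-1)`-faces of
the link `X_σ`. -/

lemma choose_key (a n : ℕ) :
    ((n + 1 + a).choose a) * (n + 1) = ((1 + a).choose a) * ((n + (a + 1)).choose (a + 1)) := by
  have h1 : (1 + a).choose a = a + 1 := by
    rw [show 1 + a = a + 1 by omega, Nat.choose_succ_self_right]
  have h2 := Nat.choose_succ_right_eq (n + a + 1) a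
  have h3 : n + a + 1 - a = n + 1 := by omega
  rw [h3] at h2
  have e1 : n + 1 + a = n + a + 1 := by omega
  have e2 : n + (a + 1) = n + a + 1 := by omega
  rw [h1, e1, e2, mul_comm (a+1)]
  exact h2.symm

lemma sAdjIter_explicit_aux (X : WSC V d) :
    ∀ (n a : ℕ) (f : Finset V → ℝ) (σ : Finset V), σ ∈ X.toWFam.dimFaces a →
    X.toWFam.sAdjIter a n f σ =
      ∑ τ ∈ (X.toWFam.link σ).dimFaces n, (X.toWFam.link σ).w τ * f (σ ∪ τ) := by
  intro n
  induction n with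
  | zero =>
    intro a f σ hσ
    have hσf : σ ∈ X.faces := (Finset.mem_filter.mp hσ).1
    have hw : X.w σ ≠ 0 := (X.w_pos σ hσf).ne'
    have hset : (X.toWFam.link σ).dimFaces 0 = {∅} := by
      ext s
      simp only [WFam.dimFaces, WFam.link, Finset.mem_filter, Finset.mem_powerset,
        Finset.mem_singleton, Finset.card_eq_zero, Finset.mem_univ, Finset.subset_univ]
      constructor
      · rintro ⟨_, _⟩; tauto
      · rintro rfl
        exact ⟨⟨trivial, Finset.disjoint_empty_left σ, by simpa using hσf⟩, rfl⟩
    rw [hset, Finset.sum_singleton]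
    simp only [WFam.link, Finset.empty_union, Finset.union_empty, Finset.card_empty,
      Nat.zero_add, Nat.choose_self, Nat.cast_one, one_mul]
    rw [div_self hw, one_mul]
    rfl
  | succ n ih =>
    intro a f σ hσ
    have hσf : σ ∈ X.faces := (Finset.mem_filter.mp hσ).1
    have hσc : σ.card = a := (Finset.mem_filter.mp hσ).2
    have hw : X.w σ ≠ 0 := (X.w_pos σ hσf).ne'
    show X.toWFam.sAdj a (X.toWFam.sAdjIter (a+1) n f) σ = _
    rw [WFam.sAdj]
    -- rewrite inner values by ih
    rw [Finset.sum_congr rfl (fun σ' hσ' => by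
      rw [ih (a+1) f σ' (Finset.mem_filter.mp hσ').1, Finset.mul_sum])]
    -- RHS: expand each term as an average over singletons
    have hRHS : ∑ τ ∈ (X.toWFam.link σ).dimFaces (n+1), (X.toWFam.link σ).w τ * f (σ ∪ τ)
        = ∑ τ ∈ (X.toWFam.link σ).dimFaces (n+1), ∑ e ∈ τ.powersetCard 1,
            ((n : ℝ) + 1)⁻¹ * ((X.toWFam.link σ).w τ * f (σ ∪ τ)) := by
      refine Finset.sum_congr rfl fun τ hτ => ?_
      have hc : τ.card = n + 1 := (Finset.mem_filter.mp hτ).2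
      rw [Finset.sum_const, Finset.card_powersetCard, hc, Nat.choose_one_right,
        nsmul_eq_mul]
      push_cast
      field_simp
    rw [hRHS, Finset.sum_sigma', Finset.sum_sigma']
    refine Finset.sum_nbij' (i := fun p => (⟨p.2 ∪ (p.1 \ σ), p.1 \ σ⟩ : Σ _ : Finset V, Finset V))
      (j := fun q => (⟨σ ∪ q.2, q.1 \ q.2⟩ : Σ _ : Finset V, Finset V)) ?_ ?_ ?_ ?_ ?_
    · -- hi
      rintro ⟨σ', τ'⟩ hp
      obtain ⟨h1, h2⟩ := Finset.mem_sigma.mp hp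
      obtain ⟨h1', hσσ'⟩ := Finset.mem_filter.mp h1
      obtain ⟨hσ'f, hσ'c⟩ := Finset.mem_filter.mp h1'
      obtain ⟨h2', hτ'c⟩ := Finset.mem_filter.mp h2
      obtain ⟨-, hτ'd, hτ'f⟩ := Finset.mem_filter.mp h2'
      simp only
      rw [Finset.mem_sigma]
      have hds : Disjoint τ' (σ' \ σ) := hτ'd.mono_right (Finset.sdiff_subset)
      have hcs : (σ' \ σ).card = 1 := by rw [Finset.card_sdiff_of_subset hσσ', hσ'c, hσc]; omega
      have hun : σ' \ σ ∪ σ = σ' := Finset.sdiff_union_of_subset hσσ'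
      constructor
      · rw [WFam.dimFaces, Finset.mem_filter, WFam.link, Finset.mem_filter]
        refine ⟨⟨Finset.mem_powerset.mpr (Finset.subset_univ _), ?_, ?_⟩, ?_⟩
        · exact Finset.disjoint_union_left.mpr ⟨hτ'd.mono_right hσσ', Finset.sdiff_disjoint⟩
        · rw [Finset.union_assoc, hun]; exact hτ'f
        · rw [Finset.card_union_of_disjoint hds, hτ'c, hcs]
      · rw [Finset.mem_powersetCard]
        exact ⟨Finset.subset_union_right, hcs⟩
    · -- hj
      rintro ⟨τ, e⟩ hq
      obtain ⟨h1, h2⟩ := Finset.mem_sigma.mp hq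
      obtain ⟨h1', hτc⟩ := Finset.mem_filter.mp h1
      obtain ⟨-, hτd, hτf⟩ := Finset.mem_filter.mp h1'
      obtain ⟨heτ, hec⟩ := Finset.mem_powersetCard.mp h2
      simp only
      rw [Finset.mem_sigma]
      have hde : Disjoint σ e := (hτd.symm.mono_right heτ)
      have hσef : σ ∪ e ∈ X.faces := X.down_closed hτf
        (Finset.union_subset (Finset.subset_union_right) (heτ.trans Finset.subset_union_left))
      have hkey : τ \ e ∪ (σ ∪ e) = τ ∪ σ := by
        ext x
        simp only [Finset.mem_union, Finset.mem_sdiff]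
        have := @heτ x
        constructor <;> intro hx <;> by_cases hxe : x ∈ e <;> tauto
      constructor
      · rw [Finset.mem_filter, WFam.dimFaces, Finset.mem_filter]
        refine ⟨⟨hσef, ?_⟩, Finset.subset_union_left⟩
        rw [Finset.card_union_of_disjoint hde, hσc, hec]
      · rw [WFam.dimFaces, Finset.mem_filter, WFam.link, Finset.mem_filter]
        refine ⟨⟨Finset.mem_powerset.mpr (Finset.subset_univ _), ?_, ?_⟩, ?_⟩
        · exact Finset.disjoint_union_right.mpr
            ⟨(hτd.mono_left Finset.sdiff_subset), Finset.sdiff_disjoint⟩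
        · rw [hkey]; exact hτf
        · rw [Finset.card_sdiff_of_subset heτ, hτc, hec]; omega
    · -- left_inv
      rintro ⟨σ', τ'⟩ hp
      obtain ⟨h1, h2⟩ := Finset.mem_sigma.mp hp
      obtain ⟨h1', hσσ'⟩ := Finset.mem_filter.mp h1
      obtain ⟨h2', hτ'c⟩ := Finset.mem_filter.mp h2
      obtain ⟨-, hτ'd, -⟩ := Finset.mem_filter.mp h2'
      have e1 : σ ∪ σ' \ σ = σ' := Finset.union_sdiff_of_subset hσσ'
      have e2 : (τ' ∪ σ' \ σ) \ (σ' \ σ) = τ' :=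
        Finset.union_sdiff_cancel_right (hτ'd.mono_right Finset.sdiff_subset)
      simp only [e1, e2]
    · -- right_inv
      rintro ⟨τ, e⟩ hq
      obtain ⟨h1, h2⟩ := Finset.mem_sigma.mp hq
      obtain ⟨h1', hτc⟩ := Finset.mem_filter.mp h1
      obtain ⟨-, hτd, -⟩ := Finset.mem_filter.mp h1'
      obtain ⟨heτ, hec⟩ := Finset.mem_powersetCard.mp h2
      have e1 : (σ ∪ e) \ σ = e := Finset.union_sdiff_cancel_left (hτd.symm.mono_right heτ)
      have e2 : τ \ e ∪ e = τ := Finset.sdiff_union_of_subset heτ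
      simp only [e1, e2]
    · -- term equality
      rintro ⟨σ', τ'⟩ hp
      obtain ⟨h1, h2⟩ := Finset.mem_sigma.mp hp
      obtain ⟨h1', hσσ'⟩ := Finset.mem_filter.mp h1
      obtain ⟨hσ'f, hσ'c⟩ := Finset.mem_filter.mp h1'
      obtain ⟨h2', hτ'c⟩ := Finset.mem_filter.mp h2
      obtain ⟨-, hτ'd, hτ'f⟩ := Finset.mem_filter.mp h2'
      simp only
      have hds : Disjoint τ' (σ' \ σ) := hτ'd.mono_right (Finset.sdiff_subset)
      have hcs : (σ' \ σ).card = 1 := by rw [Finset.card_sdiff_of_subset hσσ', hσ'c, hσc]; omega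
      have hun : σ' \ σ ∪ σ = σ' := Finset.sdiff_union_of_subset hσσ'
      have hfarg : σ ∪ (τ' ∪ σ' \ σ) = σ' ∪ τ' := by
        ext x
        simp only [Finset.mem_union, Finset.mem_sdiff]
        have := @hσσ' x
        by_cases hx : x ∈ σ <;> tauto
      have hw' : X.w σ' ≠ 0 := (X.w_pos σ' hσ'f).ne'
      rw [hfarg]
      show X.w (σ' \ σ ∪ σ) / (((σ' \ σ).card + σ.card).choose σ.card * X.w σ)
            * (X.w (τ' ∪ σ') / ((τ'.card + σ'.card).choose σ'.card * X.w σ') * f (σ' ∪ τ'))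
          = ((n : ℝ) + 1)⁻¹ * (X.w (τ' ∪ σ' \ σ ∪ σ) /
              (((τ' ∪ σ' \ σ).card + σ.card).choose σ.card * X.w σ) * f (σ' ∪ τ'))
      rw [Finset.union_assoc, hun, Finset.card_union_of_disjoint hds, hcs, hσc, hσ'c, hτ'c]
      have hC1 : ((1 + a).choose a : ℝ) ≠ 0 := by
        exact_mod_cast (Nat.choose_pos (by omega)).ne'
      have hC2 : ((n + (a + 1)).choose (a + 1) : ℝ) ≠ 0 := by
        exact_mod_cast (Nat.choose_pos (by omega)).ne'
      have hC3 : ((n + 1 + a).choose a : ℝ) ≠ 0 := by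
        exact_mod_cast (Nat.choose_pos (by omega)).ne'
      have hkey : ((n + 1 + a).choose a : ℝ) * (n + 1)
          = ((1 + a).choose a : ℝ) * ((n + (a + 1)).choose (a + 1)) := by
        exact_mod_cast congrArg (Nat.cast : ℕ → ℝ) (choose_key a n)
      have hn1 : ((n : ℝ) + 1) ≠ 0 := by positivity
      field_simp
      rw [show n + (a + 1) = n + a + 1 by omega] at hkey
      linear_combination (X.w (τ' ∪ σ') * f (σ' ∪ τ')) * hkey

theorem sAdjIter_explicit (X : WSC V d) (a n : ℕ) (hn : 1 ≤ n) (h : a + n ≤ d + 1)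
    (f : Finset V → ℝ) (σ : Finset V) (hσ : σ ∈ X.toWFam.dimFaces a) :
    X.toWFam.sAdjIter a n f σ =
      ∑ τ ∈ (X.toWFam.link σ).dimFaces n, (X.toWFam.link σ).w τ * f (σ ∪ τ) := by
  exact sAdjIter_explicit_aux X n a f σ hσ

end

end HDRW
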